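/- Let X be a free abelian group of finite rank, V = ℚ ⊗_ℤ X, and suppose V = U ⊕ U′ is a direct sum of ℚ-subspaces such that X ∩ U spans U over ℚ and X ∩ U′ spans U′ over ℚ (X being viewed inside V via x ↦ 1 ⊗ x). Let p : V → U′ be the projection along U and set X_P := p(X), a subgroup of U′ containing p(X ∩ U′) = X ∩ U′. Then the group K := {χ ∈ Hom(X, ℂˣ) : χ(x) = 1 for all x ∈ X ∩ U and χ(x) = 1 for all x ∈ X ∩ U′} is a finite abelian group, isomorphic to Hom(X_P/(X ∩ U′), ℂˣ). -/

import Mathlib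

open TensorProduct

lemma aux_finite_hom_units (G : Type*) [Group G] [Finite G] : Finite (G →* ℂˣ) := by
  have : Fintype G := Fintype.ofFinite G
  let S := rootsOfUnity (Fintype.card G) ℂ
  have fF : Finite (G →* S) := Finite.of_injective _ DFunLike.coe_injective
  refine Finite.of_surjective (fun f : G →* S ↦ (Subgroup.subtype _).comp f) fun f ↦ ?_
  have H : ∀ a, f a ∈ S := fun a => by
    simp only [S, mem_rootsOfUnity, ← map_pow, pow_card_eq_one, map_one]
  exact ⟨MonoidHom.codRestrict f S H, MonoidHom.ext fun _ ↦ rfl⟩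

/-- Let `X` be a free abelian group of finite rank, `V = ℚ ⊗_ℤ X`, and
`V = U ⊕ U'` a direct sum of ℚ-subspaces such that `X ∩ U` spans `U` and `X ∩ U'`
spans `U'` (with `X` embedded in `V` via `ι : x ↦ 1 ⊗ x`). Let `p` be the projection
of `V` onto `U'` along `U`, and `X_P := p(X)` (a subgroup of `U'` containing
`p(X ∩ U') = X ∩ U'`). Then the group
`K = {χ ∈ Hom(X, ℂˣ) : χ = 1 on X ∩ U and on X ∩ U'}` is a finite (abelian) group,
isomorphic to `Hom(X_P/(X ∩ U'), ℂˣ)`. -/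
theorem characters_trivial_on_summands_finite_and_iso
    (X : Type*) [AddCommGroup X] [Module.Free ℤ X] [Module.Finite ℤ X]
    (U U' : Submodule ℚ (ℚ ⊗[ℤ] X)) (hUU' : IsCompl U U')
    (ι : X →+ ℚ ⊗[ℤ] X) (hι : ∀ x : X, ι x = (1 : ℚ) ⊗ₜ[ℤ] x)
    (hU : Submodule.span ℚ (Set.range ι ∩ (U : Set (ℚ ⊗[ℤ] X))) = U)
    (hU' : Submodule.span ℚ (Set.range ι ∩ (U' : Set (ℚ ⊗[ℤ] X))) = U')
    (p : (ℚ ⊗[ℤ] X) →ₗ[ℚ] ℚ ⊗[ℤ] X)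
    (hpU : ∀ v ∈ U, p v = 0) (hpU' : ∀ v ∈ U', p v = v)
    (K : Subgroup (Multiplicative X →* ℂˣ))
    (hK : ∀ χ : Multiplicative X →* ℂˣ, χ ∈ K ↔
        (∀ x : X, ι x ∈ U → χ (Multiplicative.ofAdd x) = 1) ∧
        (∀ x : X, ι x ∈ U' → χ (Multiplicative.ofAdd x) = 1))
    (XP : AddSubgroup (ℚ ⊗[ℤ] X))
    (hXP : XP = AddSubgroup.map p.toAddMonoidHom ι.range)
    (XU' : AddSubgroup (ℚ ⊗[ℤ] X))
    (hXU' : XU' = ι.range ⊓ U'.toAddSubgroup) :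
    Finite K ∧
      Nonempty (K ≃*
        (Multiplicative (↥XP ⧸ (XU'.addSubgroupOf XP)) →* ℂˣ)) := by
  classical
  -- `ι` is injective
  have hιinj : Function.Injective ι := by
    rw [injective_iff_map_eq_zero]
    intro x hx
    rw [hι] at hx
    let b := Module.Free.chooseBasis ℤ X
    have h2 : ∀ i, (b.baseChange ℚ).repr ((1 : ℚ) ⊗ₜ[ℤ] x) i = ((b.repr x i : ℤ) : ℚ) := by
      intro i
      rw [Module.Basis.baseChange_repr_tmul]
      simp
    have h3 : ∀ i, ((b.repr x i : ℤ) : ℚ) = 0 := by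
      intro i
      rw [← h2, hx, map_zero, Finsupp.zero_apply]
    have hz : b.repr x = 0 := Finsupp.ext fun i => by exact_mod_cast h3 i
    have := congrArg b.repr.symm hz
    simpa using this
  set A : AddSubgroup X := U.toAddSubgroup.comap ι with hA
  set B : AddSubgroup X := U'.toAddSubgroup.comap ι with hB
  set S : AddSubgroup X := A ⊔ B with hS
  -- projection facts
  have hp2 : ∀ v : ℚ ⊗[ℤ] X, p v ∈ U' ∧ v - p v ∈ U := by
    intro v
    have hv : v ∈ U ⊔ U' := by rw [codisjoint_iff.mp hUU'.codisjoint]; trivial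
    obtain ⟨y, hy, z, hz, rfl⟩ := Submodule.mem_sup.mp hv
    have hpv : p (y + z) = z := by rw [map_add, hpU y hy, hpU' z hz, zero_add]
    rw [hpv]
    exact ⟨hz, by simpa using hy⟩
  have hmem : ∀ x : X, p (ι x) ∈ XP := by
    intro x
    rw [hXP]
    exact AddSubgroup.mem_map.mpr ⟨ι x, ⟨x, rfl⟩, rfl⟩
  let φ : X →+ XP := (p.toAddMonoidHom.comp ι).codRestrict XP hmem
  let ρ : X →+ (↥XP ⧸ XU'.addSubgroupOf XP) :=
    (QuotientAddGroup.mk' (XU'.addSubgroupOf XP)).comp φ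
  have hρsurj : Function.Surjective ρ := by
    intro q
    obtain ⟨⟨v, hv⟩, rfl⟩ := QuotientAddGroup.mk'_surjective _ q
    obtain ⟨w, hw, hwv⟩ := AddSubgroup.mem_map.mp (hXP ▸ hv)
    obtain ⟨x, rfl⟩ := hw
    refine ⟨x, ?_⟩
    have hφ : φ x = ⟨v, hv⟩ := Subtype.ext hwv
    show (QuotientAddGroup.mk' (XU'.addSubgroupOf XP)) (φ x) = _
    rw [hφ]
  have hρker : ρ.ker = S := by
    ext x
    constructor
    · intro hx
      have h1 : φ x ∈ XU'.addSubgroupOf XP := by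
        rwa [AddMonoidHom.mem_ker, AddMonoidHom.comp_apply, QuotientAddGroup.mk'_apply,
          QuotientAddGroup.eq_zero_iff] at hx
      have h2 : p (ι x) ∈ XU' := AddSubgroup.mem_addSubgroupOf.mp h1
      rw [hXU'] at h2
      obtain ⟨⟨y, hy⟩, hmemU'⟩ := h2
      have hxy : x - y ∈ A := by
        show ι (x - y) ∈ U.toAddSubgroup
        have : ι (x - y) = ι x - p (ι x) := by rw [map_sub, hy]
        rw [this]
        exact (hp2 (ι x)).2
      have hyB : y ∈ B := by
        show ι y ∈ U'.toAddSubgroup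
        rw [hy]
        exact hmemU'
      exact AddSubgroup.mem_sup.mpr ⟨x - y, hxy, y, hyB, sub_add_cancel x y⟩
    · intro hx
      have hρz : ∀ z : X, p (ι z) ∈ XU' → ρ z = 0 := by
        intro z hz
        show (QuotientAddGroup.mk' (XU'.addSubgroupOf XP)) (φ z) = 0
        rw [QuotientAddGroup.mk'_apply, QuotientAddGroup.eq_zero_iff]
        exact AddSubgroup.mem_addSubgroupOf.mpr hz
      obtain ⟨a, ha, b, hb, rfl⟩ := AddSubgroup.mem_sup.mp hx
      have hρa : ρ a = 0 := hρz a (by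
        rw [hXU']
        have : p (ι a) = 0 := hpU _ ha
        rw [this]; exact zero_mem _)
      have hρb : ρ b = 0 := hρz b (by
        rw [hXU']
        have : p (ι b) = ι b := hpU' _ hb
        rw [this]
        exact ⟨⟨b, rfl⟩, hb⟩)
      rw [AddMonoidHom.mem_ker, map_add, hρa, hρb, add_zero]
  -- finiteness of `X ⧸ S`
  have key : ∀ v ∈ Submodule.span ℚ ((Set.range ⇑ι ∩ ↑U) ∪ (Set.range ⇑ι ∩ ↑U')),
      ∃ n : ℤ, n ≠ 0 ∧ n • v ∈ AddSubgroup.map ι S := by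
    intro v hv
    induction hv using Submodule.span_induction with
    | mem w hw =>
        refine ⟨1, one_ne_zero, ?_⟩
        rw [one_smul]
        rcases hw with ⟨⟨x, rfl⟩, hxU⟩ | ⟨⟨x, rfl⟩, hxU'⟩
        · exact ⟨x, AddSubgroup.mem_sup_left (by rw [hA]; exact hxU), rfl⟩
        · exact ⟨x, AddSubgroup.mem_sup_right (by rw [hB]; exact hxU'), rfl⟩
    | zero => exact ⟨1, one_ne_zero, by simpa using (AddSubgroup.map ι S).zero_mem⟩
    | add x y hx hy ihx ihy =>
        obtain ⟨n, hn, hns⟩ := ihx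
        obtain ⟨m, hm, hms⟩ := ihy
        refine ⟨n * m, mul_ne_zero hn hm, ?_⟩
        have h1 : (n * m) • x = m • (n • x) := by rw [smul_smul, mul_comm]
        have h2 : (n * m) • y = n • (m • y) := by rw [smul_smul]
        rw [smul_add, h1, h2]
        exact add_mem (AddSubgroup.zsmul_mem _ hns m) (AddSubgroup.zsmul_mem _ hms n)
    | smul q x hx ih =>
        obtain ⟨n, hn, hns⟩ := ih
        by_cases hq : q = 0
        · refine ⟨1, one_ne_zero, ?_⟩
          rw [hq, zero_smul, smul_zero]
          exact zero_mem _
        · refine ⟨(q.den : ℤ) * n, mul_ne_zero (by exact_mod_cast q.den_ne_zero) hn, ?_⟩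
          have hden : ((q.den : ℚ)) * q = (q.num : ℚ) := by
            rw [mul_comm, Rat.mul_den_eq_num]
          have hcast : (((q.den : ℤ) * n : ℤ) : ℚ) * q = ((q.num * n : ℤ) : ℚ) := by
            push_cast
            rw [mul_right_comm, hden]
          have e : ((q.den : ℤ) * n) • (q • x) = (q.num * n) • x := by
            rw [← Int.cast_smul_eq_zsmul ℚ, ← Int.cast_smul_eq_zsmul ℚ (q.num * n) x,
              smul_smul, hcast]
          rw [e, ← smul_smul]
          exact AddSubgroup.zsmul_mem _ hns _
  have hVspan : Submodule.span ℚ ((Set.range ⇑ι ∩ ↑U) ∪ (Set.range ⇑ι ∩ ↑U')) = ⊤ := by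
    rw [Submodule.span_union, hU, hU', codisjoint_iff.mp hUU'.codisjoint]
  have htor : ∀ x : X, ∃ n : ℤ, n ≠ 0 ∧ n • x ∈ S := by
    intro x
    obtain ⟨n, hn, hns⟩ := key (ι x) (by rw [hVspan]; trivial)
    obtain ⟨s, hs, hsx⟩ := AddSubgroup.mem_map.mp hns
    exact ⟨n, hn, (hιinj (hsx.trans (map_zsmul ι n x).symm)) ▸ hs⟩
  have hfg : AddGroup.FG X := Module.Finite.iff_addGroup_fg.mp ‹Module.Finite ℤ X›
  have htorQ : AddMonoid.IsTorsion (X ⧸ S) := by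
    intro q
    obtain ⟨x, rfl⟩ := QuotientAddGroup.mk'_surjective S q
    obtain ⟨n, hn, hns⟩ := htor x
    refine isOfFinAddOrder_iff_nsmul_eq_zero.mpr ⟨n.natAbs, Int.natAbs_pos.mpr hn, ?_⟩
    have h0 : n • ((QuotientAddGroup.mk' S) x) = 0 := by
      rw [← map_zsmul, QuotientAddGroup.mk'_apply, QuotientAddGroup.eq_zero_iff]
      exact hns
    have h1 : (n.natAbs : ℤ) • ((QuotientAddGroup.mk' S) x) = 0 := by
      rcases Int.natAbs_eq n with h | h
      · rw [← h]; exact h0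
      · rw [show ((n.natAbs : ℤ)) = -n by omega, neg_zsmul, h0, neg_zero]
    rwa [natCast_zsmul] at h1
  have hfinQ : Finite (X ⧸ S) := AddCommGroup.finite_of_fg_torsion _ htorQ
  -- the equivalence `X ⧸ S ≃+ XP ⧸ (XU'.addSubgroupOf XP)`
  have hρzero : ∀ x : X, x ∈ S → ρ x = 0 := fun x hx =>
    AddMonoidHom.mem_ker.mp (hρker ▸ hx : x ∈ ρ.ker)
  have hKtriv : ∀ χ : Multiplicative X →* ℂˣ, χ ∈ K →
      ∀ x ∈ S, χ (Multiplicative.ofAdd x) = 1 := by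
    intro χ hχ x hx
    obtain ⟨a, ha, b, hb, rfl⟩ := AddSubgroup.mem_sup.mp hx
    have h1 := ((hK χ).mp hχ).1 a ha
    have h2 := ((hK χ).mp hχ).2 b hb
    rw [show Multiplicative.ofAdd (a + b) = Multiplicative.ofAdd a * Multiplicative.ofAdd b
      from rfl, map_mul, h1, h2, mul_one]
  let e : (X ⧸ S) ≃+ (↥XP ⧸ XU'.addSubgroupOf XP) :=
    (QuotientAddGroup.quotientAddEquivOfEq hρker.symm).trans
      (QuotientAddGroup.quotientKerEquivOfSurjective ρ hρsurj)
  have he : ∀ x : X, e (QuotientAddGroup.mk x) = ρ x := fun x => rfl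
  have hesymm : ∀ x : X, e.symm (ρ x) = QuotientAddGroup.mk x := fun x => by
    rw [← he x, AddEquiv.symm_apply_apply]
  have hlift : ∀ χ : K, ∀ x ∈ S,
      (MonoidHom.toAdditiveRight (χ : Multiplicative X →* ℂˣ)) x = 0 := by
    intro χ x hx
    show Additive.ofMul ((χ : Multiplicative X →* ℂˣ) (Multiplicative.ofAdd x)) = 0
    rw [hKtriv _ χ.2 x hx]
    rfl
  let fwd : K → (Multiplicative (↥XP ⧸ XU'.addSubgroupOf XP) →* ℂˣ) := fun χ =>
    AddMonoidHom.toMultiplicativeLeft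
      ((QuotientAddGroup.lift S (MonoidHom.toAdditiveRight (χ : Multiplicative X →* ℂˣ))
          (hlift χ)).comp e.symm.toAddMonoidHom)
  let bwd : (Multiplicative (↥XP ⧸ XU'.addSubgroupOf XP) →* ℂˣ) → K := fun θ =>
    ⟨θ.comp (AddMonoidHom.toMultiplicative ρ), by
      refine (hK _).mpr ⟨fun x hx => ?_, fun x hx => ?_⟩
      · show θ (Multiplicative.ofAdd (ρ x)) = 1
        rw [hρzero x (AddSubgroup.mem_sup_left hx)]
        exact map_one θ
      · show θ (Multiplicative.ofAdd (ρ x)) = 1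
        rw [hρzero x (AddSubgroup.mem_sup_right hx)]
        exact map_one θ⟩
  have hfwd_eval : ∀ (χ : K) (x : X),
      fwd χ (Multiplicative.ofAdd (ρ x)) =
        (χ : Multiplicative X →* ℂˣ) (Multiplicative.ofAdd x) := by
    intro χ x
    show Additive.toMul
      ((QuotientAddGroup.lift S (MonoidHom.toAdditiveRight (χ : Multiplicative X →* ℂˣ)) (hlift χ))
        (e.symm (ρ x))) = _
    rw [hesymm x]
    rfl
  let E : K ≃* (Multiplicative (↥XP ⧸ XU'.addSubgroupOf XP) →* ℂˣ) :=
    { toFun := fwd, invFun := bwd,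
      left_inv := by
        intro χ
        apply Subtype.ext
        apply MonoidHom.ext
        intro m
        show fwd χ (Multiplicative.ofAdd (ρ m.toAdd)) = _
        rw [hfwd_eval]
        rfl
      right_inv := by
        intro θ
        apply MonoidHom.ext
        intro m
        obtain ⟨x, hx⟩ := hρsurj m.toAdd
        have hm : m = Multiplicative.ofAdd (ρ x) := by rw [hx]; rfl
        rw [hm, hfwd_eval]
        rfl
      map_mul' := by
        intro χ₁ χ₂
        apply MonoidHom.ext
        intro m
        obtain ⟨x, hx⟩ := hρsurj m.toAdd
        have hm : m = Multiplicative.ofAdd (ρ x) := by rw [hx]; rfl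
        rw [hm, hfwd_eval]
        show _ = fwd χ₁ _ * fwd χ₂ _
        rw [hfwd_eval, hfwd_eval]
        rfl }
  have hfinQ' : Finite (↥XP ⧸ XU'.addSubgroupOf XP) := Finite.of_equiv _ e.toEquiv
  have hfinM : Finite (Multiplicative (↥XP ⧸ XU'.addSubgroupOf XP)) := hfinQ'
  have hfinHom : Finite (Multiplicative (↥XP ⧸ XU'.addSubgroupOf XP) →* ℂˣ) :=
    aux_finite_hom_units _
  exact ⟨Finite.of_equiv _ E.toEquiv.symm, ⟨E⟩⟩
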